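/- For every t ≤ H, the probability — under the trajectory distribution on times {0, ..., H} started at X_0 = x₀ that uses the closed-loop kernel of the deterministic policy π̂ at times s < t and the closed-loop kernel κ_π of the stochastic policy π at times t ≤ s < H — of the event {X_τ ∈ C for all t ≤ τ ≤ H} equals ∑_{x} ((ν t) x).toReal · Ψ(x, t), where ν t is the time-t marginal of the online π̂-driven chain started at x₀. -/

import Mathlib

open scoped BigOperators

/-- Trajectory distribution of the time-dependent kernel `κ` started at state `x` at time `t`,
run for `n` further steps: a PMF on functions `Fin (n+1) → X` recording `X_t, ..., X_{t+n}`,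
with `X_t = x` and `X_{s+1} ~ κ s (X_s)` sampled via iterated `PMF.bind`. -/
noncomputable def traj {X : Type*} (κ : ℕ → X → PMF X) : ℕ → (n : ℕ) → X → PMF (Fin (n + 1) → X)
  | _, 0, x => PMF.pure fun _ => x
  | t, n + 1, x => (κ t x).bind fun x' => (traj κ (t + 1) n x').map (Fin.cons x)

/-- Safe probability `Ψ_κ(x, t)`: the probability, under the trajectory distribution of `κ`
started at `x` at time `t` over horizon `H`, that every state of the trajectory lies in the
safe set `C`. -/
noncomputable def safeProb {X : Type*} [Fintype X] [DecidableEq X]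
    (C : Set X) [DecidablePred (· ∈ C)] (κ : ℕ → X → PMF X) (H t : ℕ) (x : X) : ℝ :=
  ∑ f : Fin (H - t + 1) → X,
    if ∀ i : Fin (H - t + 1), f i ∈ C then ((traj κ t (H - t) x) f).toReal else 0

noncomputable def marg {X : Type*} (κ : ℕ → X → PMF X) : ℕ → ℕ → X → PMF X
  | _, 0, x => PMF.pure x
  | t₀, t + 1, x => (κ t₀ x).bind fun x' => marg κ (t₀ + 1) t x'

lemma traj_congr {X : Type*} (κ κ' : ℕ → X → PMF X) :
    ∀ (n t₀ : ℕ), (∀ s x, t₀ ≤ s → κ s x = κ' s x) → ∀ x, traj κ t₀ n x = traj κ' t₀ n x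
  | 0, t₀, _, x => rfl
  | n + 1, t₀, h, x => by
    simp only [traj]
    rw [h t₀ x le_rfl]
    congr 1
    funext x'
    rw [traj_congr κ κ' n (t₀ + 1) (fun s y hs => h s y (le_trans (Nat.le_succ _) hs)) x']

lemma marg_succ_right {X : Type*} (κ : ℕ → X → PMF X) :
    ∀ (t t₀ : ℕ) (x : X), marg κ t₀ (t + 1) x = (marg κ t₀ t x).bind (κ (t₀ + t))
  | 0, t₀, x => by
    show (κ t₀ x).bind (fun x' => marg κ (t₀ + 1) 0 x') = (PMF.pure x).bind (κ (t₀ + 0))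
    simp only [marg, Nat.add_zero, PMF.bind_pure, PMF.pure_bind]
  | t + 1, t₀, x => by
    show (κ t₀ x).bind (fun x' => marg κ (t₀ + 1) (t + 1) x') = _
    have : ∀ x' : X, marg κ (t₀ + 1) (t + 1) x' = (marg κ (t₀ + 1) t x').bind (κ (t₀ + 1 + t)) :=
      fun x' => marg_succ_right κ t (t₀ + 1) x'
    simp only [this]
    rw [← PMF.bind_bind]
    have harith : t₀ + 1 + t = t₀ + (t + 1) := by omega
    rw [harith]
    rfl

lemma sum_bind_ite {α β : Type*} [Fintype α] [Fintype β] (p : PMF α) (q : α → PMF β)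
    (φ : β → Prop) [DecidablePred φ] :
    (∑ b : β, if φ b then (p.bind q) b else 0)
      = ∑ a : α, p a * ∑ b : β, if φ b then q a b else 0 :=
  calc (∑ b : β, if φ b then (p.bind q) b else 0)
      = ∑ b : β, ∑ a : α, if φ b then p a * q a b else 0 := by
        refine Finset.sum_congr rfl fun b _ => ?_
        simp only [PMF.bind_apply, tsum_fintype]
        split <;> simp
    _ = ∑ a : α, ∑ b : β, if φ b then p a * q a b else 0 := Finset.sum_comm
    _ = ∑ a : α, p a * ∑ b : β, if φ b then q a b else 0 := by
        refine Finset.sum_congr rfl fun a _ => ?_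
        rw [Finset.mul_sum]
        simp [mul_ite, mul_zero]

lemma sum_map_ite {α β : Type*} [Fintype α] [Fintype β] [DecidableEq β] (p : PMF α) (e : α → β)
    (φ : β → Prop) [DecidablePred φ] :
    (∑ b : β, if φ b then (p.map e) b else 0) = ∑ a : α, if φ (e a) then p a else 0 :=
  calc (∑ b : β, if φ b then (p.map e) b else 0)
      = ∑ b : β, ∑ a : α, if b = e a then (if φ b then p a else 0) else 0 := by
        refine Finset.sum_congr rfl fun b _ => ?_
        simp only [PMF.map_apply, tsum_fintype]
        by_cases h : φ b
        · simp only [h, if_true]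
          exact Finset.sum_congr rfl fun a _ => by
            rcases eq_or_ne b (e a) with h2 | h2 <;> simp [h2]
        · simp [h]
    _ = ∑ a : α, ∑ b : β, if b = e a then (if φ b then p a else 0) else 0 := Finset.sum_comm
    _ = ∑ a : α, if φ (e a) then p a else 0 := by
        refine Finset.sum_congr rfl fun a _ => ?_
        rw [Finset.sum_ite_eq' Finset.univ (e a)]
        simp

lemma key {X : Type*} [Fintype X] [DecidableEq X] (C : Set X) [DecidablePred (· ∈ C)]
    (κ : ℕ → X → PMF X) :
    ∀ (t n t₀ : ℕ) (x : X),
      (∑ f : Fin (n + t + 1) → X,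
        if ∀ i : Fin (n + t + 1), t ≤ (i : ℕ) → f i ∈ C then traj κ t₀ (n + t) x f else 0)
      = ∑ y : X, marg κ t₀ t x y *
          ∑ g : Fin (n + 1) → X,
            if ∀ j : Fin (n + 1), g j ∈ C then traj κ (t₀ + t) n y g else 0
  | 0, n, t₀, x => by
    simp only [Nat.add_zero, marg, PMF.pure_apply, Nat.zero_le, true_implies, ite_mul, one_mul,
      zero_mul]
    rw [Finset.sum_ite_eq' Finset.univ x]
    simp
  | t + 1, n, t₀, x => by
    show (∑ f : Fin (n + t + 1 + 1) → X,
        if ∀ i : Fin (n + t + 1 + 1), t + 1 ≤ (i : ℕ) → f i ∈ C then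
          ((κ t₀ x).bind fun x' => (traj κ (t₀ + 1) (n + t) x').map (Fin.cons x)) f else 0) = _
    rw [sum_bind_ite]
    have hmap : ∀ x' : X,
        (∑ f : Fin (n + t + 1 + 1) → X,
          if ∀ i : Fin (n + t + 1 + 1), t + 1 ≤ (i : ℕ) → f i ∈ C then
            ((traj κ (t₀ + 1) (n + t) x').map (Fin.cons x)) f else 0)
        = ∑ g : Fin (n + t + 1) → X,
          if ∀ j : Fin (n + t + 1), t ≤ (j : ℕ) → g j ∈ C then traj κ (t₀ + 1) (n + t) x' g
          else 0 := by
      intro x'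
      rw [sum_map_ite]
      refine Finset.sum_congr rfl fun g _ => ?_
      congr 1
      refine propext ⟨fun h j hj => ?_, fun h i hi => ?_⟩
      · have := h j.succ (by simpa [Fin.val_succ] using Nat.succ_le_succ hj)
        simpa using this
      · rcases Fin.eq_zero_or_eq_succ i with rfl | ⟨j, rfl⟩
        · simp at hi
        · have hj : t ≤ (j : ℕ) := by simpa [Fin.val_succ] using hi
          simpa using h j hj
    simp only [hmap]
    have hIH : ∀ x' : X, _ := fun x' : X => key C κ t n (t₀ + 1) x'
    simp only [hIH]
    have harith : t₀ + 1 + t = t₀ + (t + 1) := by omega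
    rw [← harith]
    simp only [Finset.mul_sum]
    rw [Finset.sum_comm]
    refine Finset.sum_congr rfl fun y _ => ?_
    rw [show (marg κ t₀ (t + 1) x) y = ∑ x' : X, κ t₀ x x' * marg κ (t₀ + 1) t x' y from by
      show ((κ t₀ x).bind fun x' => marg κ (t₀ + 1) t x') y = _
      simp [PMF.bind_apply, tsum_fintype]]
    rw [Finset.sum_comm]
    refine Finset.sum_congr rfl fun i _ => ?_
    rw [Finset.sum_mul]
    refine Finset.sum_congr rfl fun x' _ => ?_
    ring

lemma safeProb_eq {X : Type*} [Fintype X] [DecidableEq X] (C : Set X) [DecidablePred (· ∈ C)]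
    (κ : ℕ → X → PMF X) (H t n : ℕ) (h : H - t = n) (y : X) :
    safeProb C κ H t y
      = ∑ g : Fin (n + 1) → X,
          if ∀ j : Fin (n + 1), g j ∈ C then ((traj κ t n y) g).toReal else 0 := by
  subst h; rfl

lemma sum_ite_ne_top {α : Type*} [Fintype α] (p : PMF α) (φ : α → Prop) [DecidablePred φ] :
    (∑ a : α, if φ a then p a else 0) ≠ ⊤ := by
  refine ne_top_of_le_ne_top (ENNReal.one_ne_top) ?_
  calc (∑ a : α, if φ a then p a else 0) ≤ ∑ a : α, p a := by
        refine Finset.sum_le_sum fun a _ => ?_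
        split <;> simp
    _ = 1 := by rw [← tsum_fintype (L := SummationFilter.unconditional _)]; exact p.tsum_coe


/-- **Switched-policy decomposition (proof of Theorem 1).** For every `t ≤ H`, the probability
— under the trajectory distribution on times `{0, ..., H}` started at `X_0 = x₀` that uses the
closed-loop kernel of the deterministic policy `π̂` at times `s < t` and the closed-loop kernel
`κπ` of the stochastic policy `π` at times `t ≤ s < H` — of the event
`{X_τ ∈ C for all t ≤ τ ≤ H}` equals `∑ x, ν t x · Ψ(x, t)`, where `ν t` is the time-`t`
marginal of the online `π̂`-driven chain started at `x₀`. -/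
theorem switched_policy_safe_probability_decomposition
    {X : Type*} [Fintype X] [Nonempty X] [DecidableEq X]
    {U : Type*} [Fintype U] [Nonempty U]
    (C : Set X) [DecidablePred (· ∈ C)] (H : ℕ)
    (P : X → U → PMF X) (x₀ : X)
    (π : ℕ → X → PMF U) (πhat : ℕ → X → U)
    -- closed-loop kernel of the stochastic policy π
    (κπ : ℕ → X → PMF X) (hκπ : ∀ s x, κπ s x = (π s x).bind fun u => P x u)
    -- time-t marginals of the online π̂-driven chain started at x₀
    (ν : ℕ → PMF X) (hν0 : ν 0 = PMF.pure x₀)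
    (hν : ∀ s, ν (s + 1) = (ν s).bind fun x => P x (πhat s x)) :
    ∀ t, t ≤ H →
      (∑ f : Fin (H + 1) → X,
          if ∀ i : Fin (H + 1), t ≤ (i : ℕ) → f i ∈ C then
            ((traj (fun s x => if s < t then P x (πhat s x) else κπ s x) 0 H x₀) f).toReal
          else 0)
        = ∑ x : X, ((ν t) x).toReal * safeProb C κπ H t x := by
  intro t ht
  obtain ⟨n, rfl⟩ : ∃ n, H = n + t := ⟨H - t, (Nat.sub_add_cancel ht).symm⟩
  set κm : ℕ → X → PMF X := fun s x => if s < t then P x (πhat s x) else κπ s x with hκm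
  have htraj : ∀ y : X, traj κm (0 + t) n y = traj κπ t n y := by
    intro y
    rw [Nat.zero_add]
    exact traj_congr κm κπ n t (fun s x hs => by simp [hκm, Nat.not_lt.mpr hs]) y
  have hmarg : ∀ s, s ≤ t → marg κm 0 s x₀ = ν s := by
    intro s
    induction s with
    | zero => intro _; simp [marg, hν0]
    | succ s ih =>
      intro hs
      rw [marg_succ_right, ih (by omega), hν s, Nat.zero_add]
      congr 1
      funext x
      simp [hκm, show s < t by omega]
  calc (∑ f : Fin (n + t + 1) → X,
          if ∀ i : Fin (n + t + 1), t ≤ (i : ℕ) → f i ∈ C then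
            ((traj κm 0 (n + t) x₀) f).toReal else 0)
      = (∑ f : Fin (n + t + 1) → X,
          if ∀ i : Fin (n + t + 1), t ≤ (i : ℕ) → f i ∈ C then
            (traj κm 0 (n + t) x₀) f else 0).toReal := by
        rw [ENNReal.toReal_sum (fun f _ => by
          split
          · exact PMF.apply_ne_top _ _
          · exact ENNReal.zero_ne_top)]
        refine Finset.sum_congr rfl fun f _ => ?_
        split <;> simp
    _ = (∑ y : X, ν t y *
          ∑ g : Fin (n + 1) → X,
            if ∀ j : Fin (n + 1), g j ∈ C then traj κπ t n y g else 0).toReal := by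
        rw [key C κm t n 0 x₀]
        congr 1
        refine Finset.sum_congr rfl fun y _ => ?_
        rw [hmarg t le_rfl, htraj y]
    _ = ∑ y : X, ((ν t) y).toReal * safeProb C κπ (n + t) t y := by
        rw [ENNReal.toReal_sum (fun y _ => ENNReal.mul_ne_top (PMF.apply_ne_top _ _)
          (sum_ite_ne_top (traj κπ t n y) _))]
        refine Finset.sum_congr rfl fun y _ => ?_
        rw [ENNReal.toReal_mul]
        congr 1
        have hsp : safeProb C κπ (n + t) t y
            = ∑ g : Fin (n + 1) → X,
                if ∀ j : Fin (n + 1), g j ∈ C then ((traj κπ t n y) g).toReal else 0 :=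
          safeProb_eq C κπ (n + t) t n (by omega) y
        rw [hsp, ENNReal.toReal_sum (fun g _ => by
          split
          · exact PMF.apply_ne_top _ _
          · exact ENNReal.zero_ne_top)]
        refine Finset.sum_congr rfl fun g _ => ?_
        split <;> simp
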